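/- For 1 < Re(s) < 2 and real a > 0 (extendable to Re(a) > 0, Re(s) > −1, s ≠ 1), Hermite-type formula: ζ(s, a+1) = −a^{−s}/2 + a^{1−s}/(s−1) + (1/Γ(s)) ∫₀^∞ e^{−ax} (1/(e^x − 1) − 1/x + 1/2) x^{s−1} dx. -/

import Mathlib

open Real MeasureTheory Set

/-- The Hurwitz zeta function `ζ(s,a) = ∑_{n≥0} (n+a)^{−s}` (series valid for `Re(s) > 1`). -/
noncomputable def hzeta (s a : ℂ) : ℂ := ∑' n : ℕ, ((n:ℂ) + a) ^ (-s)

open Complex in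
lemma hermite_aux_int (s' : ℂ) (hs' : 0 < s'.re) {a : ℝ} (ha : 0 < a) :
    IntegrableOn (fun t : ℝ ↦ (t:ℂ)^(s'-1) * ((rexp (-(a*t)) : ℝ) : ℂ)) (Ioi 0) := by
  have h := Complex.GammaIntegral_convergent hs'
  rw [← mul_zero a, ← integrableOn_Ioi_comp_mul_left_iff _ _ ha] at h
  have h2 : IntegrableOn (fun x : ℝ =>
      ((a:ℂ) ^ (s' - 1))⁻¹ * (↑(rexp (-(a * x))) * (↑(a * x):ℂ) ^ (s' - 1))) (Ioi 0) :=
    h.const_mul _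
  refine h2.congr_fun (fun t ht ↦ ?_) measurableSet_Ioi
  rw [mem_Ioi] at ht
  have hane : ((a:ℂ))^(s'-1) ≠ 0 := by
    rw [Ne, Complex.cpow_eq_zero_iff, not_and_or]
    exact Or.inl (Complex.ofReal_ne_zero.mpr ha.ne')
  dsimp only; rw [Complex.ofReal_mul, mul_cpow_ofReal_nonneg ha.le ht.le]
  field_simp

open Complex in
lemma hermite_aux_mellin (s : ℂ) {a : ℝ} (ha : 0 < a) (h1 : 1 < s.re) :
    HasSum (fun i : ℕ ↦ Complex.Gamma s * 1 / (((i:ℝ) + 1 + a : ℝ) : ℂ)^s)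
      (mellin (fun t ↦ ((rexp (-a*t) / (rexp t - 1) : ℝ) : ℂ)) s) := by
  have hs0 : (0:ℝ) < s.re := by linarith
  refine hasSum_mellin (a := fun _ : ℕ ↦ (1:ℂ)) (p := fun i ↦ (i:ℝ) + 1 + a)
    (fun i ↦ Or.inr (by positivity)) hs0 (fun t ht ↦ ?_) ?_
  · rw [mem_Ioi] at ht
    have he1 : rexp (-t) < 1 := exp_lt_one_iff.mpr (by linarith)
    have h0 : (0:ℝ) < 1 - rexp (-t) := by linarith
    have hgeo := (hasSum_geometric_of_lt_one (exp_nonneg _) he1).mul_right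
      (rexp (-(1 + a) * t))
    have heq : ∀ i : ℕ, rexp (-t) ^ i * rexp (-(1 + a) * t)
        = rexp (-((i:ℝ) + 1 + a) * t) := by
      intro i
      rw [← Real.exp_nat_mul, ← Real.exp_add]
      ring_nf
    simp_rw [heq] at hgeo
    have hsum : (1 - rexp (-t))⁻¹ * rexp (-(1 + a) * t) = rexp (-a*t) / (rexp t - 1) := by
      have he : rexp t - 1 > 0 := by
        have h := Real.exp_lt_exp.mpr ht
        rw [Real.exp_zero] at h
        linarith
      have hmul : rexp t * rexp (-t) = 1 := by rw [← Real.exp_add]; simp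
      rw [show (-(1+a)*t) = -a*t + -t by ring, Real.exp_add]
      field_simp
      linear_combination hmul
    rw [hsum] at hgeo
    simpa using (Complex.hasSum_ofReal.mpr hgeo)
  · simp only [norm_one]
    have hsum : Summable (fun i : ℕ ↦ 1 / ((i:ℝ) + 1) ^ s.re) := by
      have := Real.summable_one_div_nat_rpow.mpr h1
      exact_mod_cast (summable_nat_add_iff 1).mpr this
    refine hsum.of_nonneg_of_le (fun i ↦ by positivity) (fun i ↦ ?_)
    exact one_div_le_one_div_of_le (by positivity)
      (Real.rpow_le_rpow (by positivity) (by linarith) (by linarith))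

/-- Hermite-type formula: for `1 < Re(s) < 2` and real `a > 0`,
`ζ(s, a+1) = −a^{−s}/2 + a^{1−s}/(s−1)
  + (1/Γ(s)) ∫₀^∞ e^{−ax}(1/(e^x − 1) − 1/x + 1/2) x^{s−1} dx`. -/
theorem hermite_type_hurwitz (s : ℂ) (a : ℝ) (ha : 0 < a)
    (h1 : 1 < s.re) (h2 : s.re < 2) :
    hzeta s ((a:ℂ) + 1)
      = -(a:ℂ)^(-s)/2 + (a:ℂ)^(1-s)/(s-1)
        + (1/Complex.Gamma s) * ∫ x in Ioi (0:ℝ),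
            ((Real.exp (-a*x) * (1/(Real.exp x - 1) - 1/x + 1/2) : ℝ) : ℂ) *
              (x:ℂ)^(s-1) := by
  have hs0 : (0:ℝ) < s.re := by linarith
  have hs1 : (0:ℝ) < (s-1).re := by simp [Complex.sub_re]; linarith
  set E : ℝ → ℂ := fun t ↦ ((rexp (-(a*t)) : ℝ) : ℂ) with hE
  set f1 : ℝ → ℂ := fun t ↦ (t:ℂ)^(s-1-1) * E t with hf1def
  set f2 : ℝ → ℂ := fun t ↦ (t:ℂ)^(s-1) * E t with hf2def
  set g : ℝ → ℂ := fun t ↦ (t:ℂ)^(s-1) * ((rexp (-a*t) / (rexp t - 1) : ℝ) : ℂ) with hgdef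
  have hf1 : IntegrableOn f1 (Ioi 0) := hermite_aux_int (s-1) hs1 ha
  have hf2 : IntegrableOn f2 (Ioi 0) := hermite_aux_int s hs0 ha
  -- integrability of g
  have hgmeas : AEStronglyMeasurable g (volume.restrict (Ioi 0)) := by
    refine ContinuousOn.aestronglyMeasurable ?_ measurableSet_Ioi
    apply ContinuousOn.mul
    · exact fun t ht ↦ (Complex.continuousAt_ofReal_cpow_const t (s-1)
        (Or.inr (ne_of_gt ht))).continuousWithinAt
    · refine Complex.continuous_ofReal.comp_continuousOn ?_
      apply ContinuousOn.div
      · exact ((continuous_const.mul continuous_id).rexp).continuousOn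
      · exact (Real.continuous_exp.sub continuous_const).continuousOn
      · intro t ht
        have h := Real.exp_lt_exp.mpr (show (0:ℝ) < t from ht)
        rw [Real.exp_zero] at h
        exact sub_ne_zero_of_ne h.ne'
  have hexp_lb : ∀ t : ℝ, 0 < t → t ≤ rexp t - 1 := fun t _ ↦ by
    have := Real.add_one_le_exp t
    linarith
  have hg : IntegrableOn g (Ioi 0) := by
    refine Integrable.mono hf1 hgmeas ?_
    filter_upwards [ae_restrict_mem measurableSet_Ioi] with t ht
    rw [mem_Ioi] at ht
    have het : (0:ℝ) < rexp t - 1 := lt_of_lt_of_le ht (hexp_lb t ht)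
    have hng : ‖g t‖ = t ^ ((s-1).re) * (rexp (-a*t) / (rexp t - 1)) := by
      rw [hgdef]
      simp only [norm_mul, Complex.norm_real, Real.norm_eq_abs,
        Complex.norm_cpow_eq_rpow_re_of_pos ht]
      rw [abs_of_nonneg (by positivity)]
    have hnf : ‖f1 t‖ = t ^ ((s-1-1).re) * rexp (-(a*t)) := by
      rw [hf1def]
      simp only [norm_mul, Complex.norm_real, Real.norm_eq_abs,
        Complex.norm_cpow_eq_rpow_re_of_pos ht, hE]
      rw [abs_of_nonneg (exp_nonneg _)]
    rw [hng, hnf]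
    have h3 : rexp (-a*t) / (rexp t - 1) ≤ rexp (-a*t) / t := by
      gcongr
      exact hexp_lb t ht
    calc t ^ ((s-1).re) * (rexp (-a*t) / (rexp t - 1))
        ≤ t ^ ((s-1).re) * (rexp (-a*t) / t) :=
          mul_le_mul_of_nonneg_left h3 (by positivity)
      _ = t ^ ((s-1-1).re) * rexp (-(a*t)) := by
          rw [show (s-1-1).re = (s-1).re - 1 by simp [Complex.sub_re]]
          rw [Real.rpow_sub ht, Real.rpow_one]
          rw [show -(a*t) = -a*t by ring]
          ring
  -- pointwise identity on Ioi 0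
  have hcongr : EqOn
      (fun x : ℝ ↦ ((rexp (-a*x) * (1/(rexp x - 1) - 1/x + 1/2) : ℝ) : ℂ) * (x:ℂ)^(s-1))
      (fun x ↦ g x - f1 x + (1/2) * f2 x) (Ioi 0) := by
    intro x hx
    rw [mem_Ioi] at hx
    have het : (0:ℝ) < rexp x - 1 := lt_of_lt_of_le hx (hexp_lb x hx)
    have hxne : (x:ℂ) ≠ 0 := Complex.ofReal_ne_zero.mpr hx.ne'
    have hetne : ((rexp x : ℝ) : ℂ) - 1 ≠ 0 := by
      rw [show ((rexp x : ℝ) : ℂ) - 1 = ((rexp x - 1 : ℝ) : ℂ) by push_cast; ring]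
      exact Complex.ofReal_ne_zero.mpr het.ne'
    have hpow : (x:ℂ)^(s-1-1) = (x:ℂ)^(s-1) / x := by
      rw [Complex.cpow_sub _ _ hxne, Complex.cpow_one]
    simp only [hgdef, hf1def, hf2def, hE, hpow]
    rw [show (-(a*x)) = -a*x by ring]
    push_cast
    field_simp
  -- the three integrals
  have hIf1 : (∫ t in Ioi (0:ℝ), f1 t) = (1/(a:ℂ))^(s-1) * Complex.Gamma (s-1) := by
    have h := Complex.integral_cpow_mul_exp_neg_mul_Ioi hs1 ha
    rw [← h]
    refine setIntegral_congr_fun measurableSet_Ioi (fun t ht ↦ ?_)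
    simp only [hf1def, hE]
    congr 1
    push_cast [Complex.ofReal_exp]
    ring_nf
  have hIf2 : (∫ t in Ioi (0:ℝ), f2 t) = (1/(a:ℂ))^s * Complex.Gamma s := by
    have h := Complex.integral_cpow_mul_exp_neg_mul_Ioi hs0 ha
    rw [← h]
    refine setIntegral_congr_fun measurableSet_Ioi (fun t ht ↦ ?_)
    simp only [hf2def, hE]
    congr 1
    push_cast [Complex.ofReal_exp]
    ring_nf
  have hIg : (∫ t in Ioi (0:ℝ), g t) = Complex.Gamma s * hzeta s ((a:ℂ)+1) := by
    have key := (hermite_aux_mellin s ha h1).tsum_eq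
    have hm : mellin (fun t ↦ ((rexp (-a*t) / (rexp t - 1) : ℝ) : ℂ)) s
        = ∫ t in Ioi (0:ℝ), g t := by
      simp only [mellin, smul_eq_mul, hgdef]
    rw [← hm, ← key, hzeta, ← tsum_mul_left]
    refine tsum_congr fun n ↦ ?_
    rw [Complex.cpow_neg, mul_one, div_eq_mul_inv]
    congr 2
    push_cast
    ring_nf
  -- split the integral
  have hsplit : (∫ x in Ioi (0:ℝ),
        ((rexp (-a*x) * (1/(rexp x - 1) - 1/x + 1/2) : ℝ) : ℂ) * (x:ℂ)^(s-1))
      = (∫ t in Ioi (0:ℝ), g t) - (∫ t in Ioi (0:ℝ), f1 t)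
        + (1/2) * ∫ t in Ioi (0:ℝ), f2 t := by
    rw [setIntegral_congr_fun measurableSet_Ioi hcongr]
    have hsub : Integrable (fun x ↦ g x - f1 x) (volume.restrict (Ioi 0)) := hg.sub hf1
    have hconst : Integrable (fun x ↦ (1/2 : ℂ) * f2 x) (volume.restrict (Ioi 0)) :=
      hf2.const_mul _
    rw [integral_add hsub hconst, integral_sub hg hf1, integral_const_mul]
  rw [hsplit, hIg, hIf1, hIf2]
  -- final algebra
  have hargne : (a:ℂ).arg ≠ Real.pi := by
    rw [Complex.arg_ofReal_of_nonneg ha.le]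
    exact (Real.pi_ne_zero).symm
  have hpow1 : (1/(a:ℂ))^(s-1) = (a:ℂ)^(1-s) := by
    rw [one_div, Complex.inv_cpow _ _ hargne, ← Complex.cpow_neg, neg_sub]
  have hpow2 : (1/(a:ℂ))^s = (a:ℂ)^(-s) := by
    rw [one_div, Complex.inv_cpow _ _ hargne, ← Complex.cpow_neg]
  have hs1ne : s - 1 ≠ 0 := by
    intro h
    rw [h] at hs1
    simp at hs1
  have hGne : Complex.Gamma s ≠ 0 := by
    apply Complex.Gamma_ne_zero
    intro m h
    rw [h] at hs0
    simp at hs0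
    have : (0:ℝ) ≤ m := Nat.cast_nonneg m
    linarith [hs0]
  have hGrec : Complex.Gamma s = (s-1) * Complex.Gamma (s-1) := by
    have h := Complex.Gamma_add_one (s-1) hs1ne
    rwa [sub_add_cancel] at h
  have hG1ne : Complex.Gamma (s-1) ≠ 0 := by
    intro h
    rw [hGrec, h, mul_zero] at hGne
    exact hGne rfl
  rw [hpow1, hpow2, hGrec]
  field_simp
  ring
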